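/- Let X, Y, W be finite nonempty sets and let K be a Markov kernel assigning to each pair (x,y) ∈ X × Y a probability mass function K(x,y)(·) on W. Suppose K is factorized, i.e., there exist functions r : W × X → ℝ and s : W × Y → ℝ such that K(x,y)(w) = r(w,x) · s(w,y) for all (x,y,w). Then for every joint probability mass function P on X × Y, letting (X, Y) ~ P and W be drawn from K(X,Y), the Relational Memorization is nonpositive: I(X ; Y | W) − I(X ; Y) ≤ 0. -/

import Mathlib

open scoped BigOperators

/-- Mutual information `I(A;B)` of a (joint) probability mass function `p` on `A × B`,
with natural logarithm and the convention `0 · log 0 = 0` (automatic since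
`Real.log 0 = 0` in Mathlib). -/
noncomputable def mutualInfo {A B : Type*} [Fintype A] [Fintype B]
    (p : A → B → ℝ) : ℝ :=
  ∑ a, ∑ b,
    p a b * Real.log (p a b / ((∑ b', p a b') * (∑ a', p a' b)))

/-- Conditional mutual information `I(A;B|C)` of a (joint) probability mass
function `p` on `A × B × C`:
`I(A;B|C) = ∑ p(a,b,c) log ( p(a,b,c) p(c) / (p(a,c) p(b,c)) )`. -/
noncomputable def condMutualInfo {A B C : Type*} [Fintype A] [Fintype B] [Fintype C]
    (p : A → B → C → ℝ) : ℝ :=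
  ∑ a, ∑ b, ∑ c,
    p a b c * Real.log ((p a b c * (∑ a', ∑ b', p a' b' c)) /
      ((∑ b', p a b' c) * (∑ a', p a' b c)))

private lemma mul_div_self_le' {a t : ℝ} (_ha : 0 ≤ a) (ht : 0 ≤ t) : a * (t / a) ≤ t := by
  rcases eq_or_ne a 0 with h | h
  · simp [h, ht]
  · rw [mul_div_cancel₀ _ h]

private lemma aux_factorized
    {X Y W : Type*} [Fintype X] [Fintype Y] [Fintype W]
    (r : W → X → ℝ) (s : W → Y → ℝ)
    (hr : ∀ w x, 0 ≤ r w x) (hs : ∀ w y, 0 ≤ s w y)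
    (hK1 : ∀ x y, ∑ w, r w x * s w y = 1)
    (P : X → Y → ℝ) (hP0 : ∀ x y, 0 ≤ P x y) (hP1 : ∑ x, ∑ y, P x y = 1) :
    condMutualInfo (fun (x : X) (y : Y) (w : W) => P x y * (r w x * s w y))
      - mutualInfo (fun (x : X) (y : Y) => ∑ w : W, P x y * (r w x * s w y)) ≤ 0 := by
  classical
  set Q : X → Y → W → ℝ := fun x y w => P x y * (r w x * s w y) with hQ_def
  set px : X → ℝ := fun x => ∑ y, P x y with hpx_def
  set py : Y → ℝ := fun y => ∑ x, P x y with hpy_def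
  set pxw : X → W → ℝ := fun x w => ∑ y, P x y * (r w x * s w y) with hpxw_def
  set pyw : Y → W → ℝ := fun y w => ∑ x, P x y * (r w x * s w y) with hpyw_def
  set pw : W → ℝ := fun w => ∑ x, ∑ y, P x y * (r w x * s w y) with hpw_def
  set u : W → ℝ := fun w => ∑ x, px x * r w x with hu_def
  set G : X → W → ℝ := fun x w => pw w * px x * r w x / (u w * pxw x w) with hG_def
  set H : Y → W → ℝ := fun y w => py y * s w y * u w / pyw y w with hH_def
  have hQ0 : ∀ x y w, 0 ≤ Q x y w := fun x y w =>
    mul_nonneg (hP0 x y) (mul_nonneg (hr w x) (hs w y))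
  have hmarg : ∀ x y, ∑ w, P x y * (r w x * s w y) = P x y := by
    intro x y; rw [← Finset.mul_sum, hK1, mul_one]
  have hmargQ : ∀ x y, ∑ w, Q x y w = P x y := hmarg
  have hpx0 : ∀ x, 0 ≤ px x := fun x => Finset.sum_nonneg fun y _ => hP0 x y
  have hpy0 : ∀ y, 0 ≤ py y := fun y => Finset.sum_nonneg fun x _ => hP0 x y
  have hpxw0 : ∀ x w, 0 ≤ pxw x w := fun x w =>
    Finset.sum_nonneg fun y _ => hQ0 x y w
  have hpyw0 : ∀ y w, 0 ≤ pyw y w := fun y w =>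
    Finset.sum_nonneg fun x _ => hQ0 x y w
  have hpw0 : ∀ w, 0 ≤ pw w := fun w =>
    Finset.sum_nonneg fun x _ => hpxw0 x w
  have hu0 : ∀ w, 0 ≤ u w := fun w =>
    Finset.sum_nonneg fun x _ => mul_nonneg (hpx0 x) (hr w x)
  have hpx1 : ∑ x, px x = 1 := hP1
  have hpy1 : ∑ y, py y = 1 := by
    rw [hpy_def]; rw [Finset.sum_comm]; exact hP1
  -- ∑_w u(w) v(w) = 1
  have huv : ∑ w, u w * (∑ y, py y * s w y) = 1 := by
    calc ∑ w, u w * (∑ y, py y * s w y)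
        = ∑ w, ∑ x, ∑ y, px x * py y * (r w x * s w y) := by
          refine Finset.sum_congr rfl fun w _ => ?_
          rw [hu_def, Finset.sum_mul_sum]
          exact Finset.sum_congr rfl fun x _ => Finset.sum_congr rfl fun y _ => by ring
      _ = ∑ x, ∑ y, ∑ w, px x * py y * (r w x * s w y) := by
          rw [Finset.sum_comm]
          exact Finset.sum_congr rfl fun x _ => Finset.sum_comm
      _ = ∑ x, ∑ y, px x * py y := by
          refine Finset.sum_congr rfl fun x _ => Finset.sum_congr rfl fun y _ => ?_
          rw [← Finset.mul_sum, hK1, mul_one]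
      _ = 1 := by rw [← Finset.sum_mul_sum, hpx1, hpy1, mul_one]
  -- unfold the information quantities
  have hcmi : condMutualInfo (fun (x : X) (y : Y) (w : W) => P x y * (r w x * s w y))
      = ∑ x, ∑ y, ∑ w, Q x y w *
          Real.log ((Q x y w * pw w) / (pxw x w * pyw y w)) := rfl
  have hmi : mutualInfo (fun (x : X) (y : Y) => ∑ w : W, P x y * (r w x * s w y))
      = ∑ x, ∑ y, P x y * Real.log (P x y / (px x * py y)) := by
    simp only [mutualInfo, hmarg]
    rfl
  rw [hcmi, hmi]
  -- rewrite the MI sum as a triple sum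
  have hsplit : ∑ x, ∑ y, P x y * Real.log (P x y / (px x * py y))
      = ∑ x, ∑ y, ∑ w, Q x y w * Real.log (P x y / (px x * py y)) := by
    refine Finset.sum_congr rfl fun x _ => Finset.sum_congr rfl fun y _ => ?_
    rw [← Finset.sum_mul, hmargQ]
  rw [hsplit]
  have hdiff : (∑ x, ∑ y, ∑ w, Q x y w *
          Real.log ((Q x y w * pw w) / (pxw x w * pyw y w)))
      - (∑ x, ∑ y, ∑ w, Q x y w * Real.log (P x y / (px x * py y)))
      = ∑ x, ∑ y, ∑ w, (Q x y w *
          Real.log ((Q x y w * pw w) / (pxw x w * pyw y w))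
        - Q x y w * Real.log (P x y / (px x * py y))) := by
    simp only [← Finset.sum_sub_distrib]
  rw [hdiff]
  -- key per-term inequality
  have key : ∀ x y w,
      Q x y w * Real.log ((Q x y w * pw w) / (pxw x w * pyw y w))
        - Q x y w * Real.log (P x y / (px x * py y))
      ≤ Q x y w * G x w + Q x y w * H y w - 2 * Q x y w := by
    intro x y w
    by_cases hq : Q x y w = 0
    · rw [hq]; simp
    · have hq' : 0 < Q x y w := lt_of_le_of_ne (hQ0 x y w) (Ne.symm hq)
      have hP : 0 < P x y := by
        rcases (lt_or_eq_of_le (hP0 x y)) with h | h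
        · exact h
        · exact absurd (by rw [hQ_def]; simp [← h]) hq
      have hrs : 0 < r w x * s w y := by
        rcases (lt_or_eq_of_le (mul_nonneg (hr w x) (hs w y))) with h | h
        · exact h
        · exact absurd (by rw [hQ_def]; simp [← h]) hq
      have hrw : 0 < r w x := by
        rcases (lt_or_eq_of_le (hr w x)) with h | h
        · exact h
        · exact absurd (by rw [← h, zero_mul]) (ne_of_gt hrs)
      have hsw : 0 < s w y := by
        rcases (lt_or_eq_of_le (hs w y)) with h | h
        · exact h
        · exact absurd (by rw [← h, mul_zero]) (ne_of_gt hrs)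
      have hpxp : 0 < px x :=
        lt_of_lt_of_le hP (Finset.single_le_sum (fun i _ => hP0 x i) (Finset.mem_univ y))
      have hpyp : 0 < py y :=
        lt_of_lt_of_le hP (Finset.single_le_sum (fun i _ => hP0 i y) (Finset.mem_univ x))
      have hpxwp : 0 < pxw x w :=
        lt_of_lt_of_le hq' (Finset.single_le_sum (f := fun y' => P x y' * (r w x * s w y'))
          (fun i _ => hQ0 x i w) (Finset.mem_univ y))
      have hpywp : 0 < pyw y w :=
        lt_of_lt_of_le hq' (Finset.single_le_sum (f := fun x' => P x' y * (r w x' * s w y))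
          (fun i _ => hQ0 i y w) (Finset.mem_univ x))
      have hpwp : 0 < pw w :=
        lt_of_lt_of_le hpxwp (Finset.single_le_sum
          (f := fun x' => ∑ y', P x' y' * (r w x' * s w y'))
          (fun i _ => hpxw0 i w) (Finset.mem_univ x))
      have hup : 0 < u w :=
        lt_of_lt_of_le (mul_pos hpxp hrw) (Finset.single_le_sum
          (f := fun x' => px x' * r w x')
          (fun i _ => mul_nonneg (hpx0 i) (hr w i)) (Finset.mem_univ x))
      have hGp : 0 < G x w := by
        rw [hG_def]
        exact div_pos (mul_pos (mul_pos hpwp hpxp) hrw) (mul_pos hup hpxwp)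
      have hHp : 0 < H y w := by
        rw [hH_def]
        exact div_pos (mul_pos (mul_pos hpyp hsw) hup) hpywp
      have hR1p : 0 < Q x y w * pw w / (pxw x w * pyw y w) :=
        div_pos (mul_pos hq' hpwp) (mul_pos hpxwp hpywp)
      have hR2p : 0 < P x y / (px x * py y) := div_pos hP (mul_pos hpxp hpyp)
      have hlogs : Real.log (Q x y w * pw w / (pxw x w * pyw y w))
          - Real.log (P x y / (px x * py y))
          = Real.log (G x w) + Real.log (H y w) := by
        rw [← Real.log_div (ne_of_gt hR1p) (ne_of_gt hR2p),
            ← Real.log_mul (ne_of_gt hGp) (ne_of_gt hHp)]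
        congr 1
        rw [hG_def, hH_def, hQ_def]
        field_simp
      calc Q x y w * Real.log (Q x y w * pw w / (pxw x w * pyw y w))
            - Q x y w * Real.log (P x y / (px x * py y))
          = Q x y w * (Real.log (Q x y w * pw w / (pxw x w * pyw y w))
              - Real.log (P x y / (px x * py y))) := by ring
        _ = Q x y w * (Real.log (G x w) + Real.log (H y w)) := by rw [hlogs]
        _ ≤ Q x y w * ((G x w - 1) + (H y w - 1)) := by
            refine mul_le_mul_of_nonneg_left ?_ (hQ0 x y w)
            exact add_le_add (Real.log_le_sub_one_of_pos hGp)
              (Real.log_le_sub_one_of_pos hHp)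
        _ = Q x y w * G x w + Q x y w * H y w - 2 * Q x y w := by ring
  -- sum the per-term inequality
  have hle : ∑ x, ∑ y, ∑ w, (Q x y w *
          Real.log ((Q x y w * pw w) / (pxw x w * pyw y w))
        - Q x y w * Real.log (P x y / (px x * py y)))
      ≤ ∑ x, ∑ y, ∑ w, (Q x y w * G x w + Q x y w * H y w - 2 * Q x y w) := by
    refine Finset.sum_le_sum fun x _ => Finset.sum_le_sum fun y _ =>
      Finset.sum_le_sum fun w _ => key x y w
  refine le_trans hle ?_
  have hexpand : ∑ x, ∑ y, ∑ w, (Q x y w * G x w + Q x y w * H y w - 2 * Q x y w)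
      = (∑ x, ∑ y, ∑ w, Q x y w * G x w) + (∑ x, ∑ y, ∑ w, Q x y w * H y w)
        - 2 * (∑ x, ∑ y, ∑ w, Q x y w) := by
    simp only [Finset.sum_add_distrib, Finset.sum_sub_distrib, Finset.mul_sum]
  rw [hexpand]
  have hQ1 : ∑ x, ∑ y, ∑ w, Q x y w = 1 := by
    simp only [hmargQ]; exact hP1
  -- ∑ Q G ≤ 1
  have hSG : ∑ x, ∑ y, ∑ w, Q x y w * G x w ≤ 1 := by
    have h1 : ∑ x, ∑ y, ∑ w, Q x y w * G x w
        = ∑ x, ∑ w, pxw x w * G x w := by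
      refine Finset.sum_congr rfl fun x _ => ?_
      rw [Finset.sum_comm]
      exact Finset.sum_congr rfl fun w _ => by rw [← Finset.sum_mul]
    rw [h1]
    have h2 : ∀ x w, pxw x w * G x w ≤ pw w * px x * r w x / u w := by
      intro x w
      have : G x w = (pw w * px x * r w x / u w) / pxw x w := by
        rw [hG_def, div_div]
      rw [this]
      exact mul_div_self_le' (hpxw0 x w)
        (div_nonneg (mul_nonneg (mul_nonneg (hpw0 w) (hpx0 x)) (hr w x)) (hu0 w))
    refine le_trans (Finset.sum_le_sum fun x _ => Finset.sum_le_sum fun w _ => h2 x w) ?_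
    have h3 : ∑ x, ∑ w, pw w * px x * r w x / u w
        = ∑ w, pw w * u w / u w := by
      rw [Finset.sum_comm]
      refine Finset.sum_congr rfl fun w _ => ?_
      rw [← Finset.sum_div]
      congr 1
      rw [hu_def, Finset.mul_sum]
      exact Finset.sum_congr rfl fun x _ => by ring
    rw [h3]
    have h4 : ∀ w, pw w * u w / u w ≤ pw w := by
      intro w
      rcases eq_or_ne (u w) 0 with h | h
      · simp [h, hpw0 w]
      · rw [mul_div_assoc, div_self h, mul_one]
    refine le_trans (Finset.sum_le_sum fun w _ => h4 w) ?_
    have h5 : ∑ w, pw w = 1 := by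
      calc ∑ w, pw w = ∑ w, ∑ x, ∑ y, Q x y w := rfl
        _ = ∑ x, ∑ y, ∑ w, Q x y w := by
            rw [Finset.sum_comm]
            exact Finset.sum_congr rfl fun x _ => Finset.sum_comm
        _ = 1 := hQ1
    rw [h5]
  -- ∑ Q H ≤ 1
  have hSH : ∑ x, ∑ y, ∑ w, Q x y w * H y w ≤ 1 := by
    have h1 : ∑ x, ∑ y, ∑ w, Q x y w * H y w
        = ∑ y, ∑ w, pyw y w * H y w := by
      rw [Finset.sum_comm]
      refine Finset.sum_congr rfl fun y _ => ?_
      rw [Finset.sum_comm]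
      exact Finset.sum_congr rfl fun w _ => by rw [← Finset.sum_mul]
    rw [h1]
    have h2 : ∀ y w, pyw y w * H y w ≤ py y * s w y * u w := by
      intro y w
      have : H y w = (py y * s w y * u w) / pyw y w := by rw [hH_def]
      rw [this]
      exact mul_div_self_le' (hpyw0 y w)
        (mul_nonneg (mul_nonneg (hpy0 y) (hs w y)) (hu0 w))
    refine le_trans (Finset.sum_le_sum fun y _ => Finset.sum_le_sum fun w _ => h2 y w) ?_
    have h3 : ∑ y, ∑ w, py y * s w y * u w = ∑ w, u w * (∑ y, py y * s w y) := by
      rw [Finset.sum_comm]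
      refine Finset.sum_congr rfl fun w _ => ?_
      rw [Finset.mul_sum]
      exact Finset.sum_congr rfl fun y _ => by ring
    rw [h3, huv]
  rw [hQ1]
  linarith


/-- If the Markov kernel `K : X × Y → PMF(W)` is factorized,
i.e. `K(x,y)(w) = r(w,x) · s(w,y)`, then for every joint pmf `P` on `X × Y` the
Relational Memorization of the induced joint law `p(x,y,w) = P(x,y) K(x,y)(w)` is
nonpositive: `I(X ; Y | W) − I(X ; Y) ≤ 0`. -/
theorem factorized_kernel_nonpositive_relational_memorization
    {X Y W : Type*} [Fintype X] [Fintype Y] [Fintype W]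
    [Nonempty X] [Nonempty Y] [Nonempty W]
    (K : X → Y → W → ℝ)
    (hK0 : ∀ x y w, 0 ≤ K x y w) (hK1 : ∀ x y, ∑ w, K x y w = 1)
    (hfact : ∃ (r : W → X → ℝ) (s : W → Y → ℝ),
      ∀ x y w, K x y w = r w x * s w y) :
    ∀ P : X → Y → ℝ, (∀ x y, 0 ≤ P x y) → (∑ x, ∑ y, P x y = 1) →
      condMutualInfo (fun (x : X) (y : Y) (w : W) => P x y * K x y w)
        - mutualInfo (fun (x : X) (y : Y) => ∑ w : W, P x y * K x y w) ≤ 0 := by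
  obtain ⟨r0, s0, hf⟩ := hfact
  have hK' : ∀ x y w, K x y w = |r0 w x| * |s0 w y| := by
    intro x y w
    rw [← abs_mul, ← hf, abs_of_nonneg (hK0 x y w)]
  intro P hP0 hP1
  have h1 : (fun (x : X) (y : Y) (w : W) => P x y * K x y w)
      = fun x y w => P x y * (|r0 w x| * |s0 w y|) := by
    funext x y w; rw [hK']
  have h2 : (fun (x : X) (y : Y) => ∑ w : W, P x y * K x y w)
      = fun x y => ∑ w : W, P x y * (|r0 w x| * |s0 w y|) := by
    funext x y
    exact Finset.sum_congr rfl fun w _ => by rw [hK']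
  rw [h1, h2]
  exact aux_factorized (fun w x => |r0 w x|) (fun w y => |s0 w y|)
    (fun w x => abs_nonneg _) (fun w y => abs_nonneg _)
    (fun x y => by
      rw [show ∑ w, |r0 w x| * |s0 w y| = ∑ w, K x y w from
        Finset.sum_congr rfl fun w _ => (hK' x y w).symm, hK1])
    P hP0 hP1
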